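/- For ideals I, J of A* containing A^k (with |A| > 1), one has τ_{I∩J} = τ_I ∩ τ_J and τ_{I∪J} = τ_I ∪ τ_J. -/
import Mathlib


/-- The relation `τ_I`: `u` and `v` have a common suffix in `I`. -/
def tauRel {A : Type*} (I : Set (List A)) (u v : List A) : Prop :=
  ∃ w ∈ I, w <:+ u ∧ w <:+ v

/-- for ideals `I, J` of `A*` containing `A^k` (with `|A| > 1`),
`τ_{I∩J} = τ_I ∩ τ_J` and `τ_{I∪J} = τ_I ∪ τ_J` (as relations on `A^k`). -/
theorem tauRel_inter_union {A : Type*} [Fintype A] (hA : 1 < Fintype.card A)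
    (k : ℕ) (hk : 1 ≤ k) (I J : Set (List A))
    (hI : ∀ u v w : List A, w ∈ I → u ++ w ++ v ∈ I)
    (hJ : ∀ u v w : List A, w ∈ J → u ++ w ++ v ∈ J)
    (hIk : ∀ w : List A, w.length = k → w ∈ I)
    (hJk : ∀ w : List A, w.length = k → w ∈ J) :
    ∀ u v : List A, u.length = k → v.length = k →
      (tauRel (I ∩ J) u v ↔ tauRel I u v ∧ tauRel J u v) ∧
      (tauRel (I ∪ J) u v ↔ tauRel I u v ∨ tauRel J u v) := by
  intro u v _ _
  constructor
  · constructor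
    · rintro ⟨w, ⟨hwI, hwJ⟩, hu, hv⟩
      exact ⟨⟨w, hwI, hu, hv⟩, ⟨w, hwJ, hu, hv⟩⟩
    · rintro ⟨⟨w₁, hw₁, hu₁, hv₁⟩, ⟨w₂, hw₂, hu₂, hv₂⟩⟩
      rcases List.suffix_or_suffix_of_suffix hu₁ hu₂ with h | h
      · obtain ⟨x, rfl⟩ := h
        refine ⟨x ++ w₁, ⟨?_, hw₂⟩, hu₂, hv₂⟩
        simpa using hI x [] w₁ hw₁
      · obtain ⟨x, rfl⟩ := h
        refine ⟨x ++ w₂, ⟨hw₁, ?_⟩, hu₁, hv₁⟩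
        simpa using hJ x [] w₂ hw₂
  · constructor
    · rintro ⟨w, hw | hw, hu, hv⟩
      · exact Or.inl ⟨w, hw, hu, hv⟩
      · exact Or.inr ⟨w, hw, hu, hv⟩
    · rintro (⟨w, hw, hu, hv⟩ | ⟨w, hw, hu, hv⟩)
      · exact ⟨w, Or.inl hw, hu, hv⟩
      · exact ⟨w, Or.inr hw, hu, hv⟩
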